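/- Under conditions (C.5), (C.7) and (C.9.ii), ‖L_n − E L_n‖_op = O_p(d/n^{1/2}); in particular, if d = o(n^{1/2}) then ‖L_n − E L_n‖_op → 0 in probability. -/

import Mathlib

open MeasureTheory ProbabilityTheory Filter Matrix Topology Asymptotics
open scoped BigOperators ENNReal NNReal

noncomputable section

/-- Euclidean norm on `Fin d → ℝ`. -/
def euclNorm {d : ℕ} (v : Fin d → ℝ) : ℝ := Real.sqrt (∑ j, (v j) ^ 2)

/-- `μ` is the centered Gaussian measure on `ℝ^d` with covariance matrix `S`,
characterized through its one–dimensional marginals. -/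
def IsCenteredGaussian {d : ℕ} (μ : Measure (Fin d → ℝ))
    (S : Matrix (Fin d) (Fin d) ℝ) : Prop :=
  ∀ t : Fin d → ℝ,
    μ.map (fun v => t ⬝ᵥ v) = gaussianReal 0 (t ⬝ᵥ S.mulVec t).toNNReal

/-- Supremum of a set-function over the class of measurable convex subsets of `ℝ^d`. -/
def convexSup {d : ℕ} (f : Set (Fin d → ℝ) → ℝ) : ℝ :=
  ⨆ A : {A : Set (Fin d → ℝ) // MeasurableSet A ∧ Convex ℝ A}, f A.1

/-- Supremum of a set-function over the class of Euclidean balls of `ℝ^d`. -/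
def ballSup {d : ℕ} (f : Set (Fin d → ℝ) → ℝ) : ℝ :=
  ⨆ c : Fin d → ℝ, ⨆ r : ℝ, f {v | euclNorm (v - c) < r}

/-- `ε ` - neighbourhood of a set (with respect to the Euclidean distance). -/
def nbhd {d : ℕ} (s : Set (Fin d → ℝ)) (ε : ℝ) : Set (Fin d → ℝ) :=
  {v | ∃ a ∈ s, euclNorm (v - a) < ε}

/-- Hilbert–Schmidt (Frobenius) norm of a matrix. -/
def hsNorm {d : ℕ} (A : Matrix (Fin d) (Fin d) ℝ) : ℝ :=
  Real.sqrt (∑ j, ∑ k, (A j k) ^ 2)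

/-- Operator norm of a matrix, acting on Euclidean space. -/
def matOpNorm {d : ℕ} (A : Matrix (Fin d) (Fin d) ℝ) : ℝ :=
  ⨆ v : {v : Fin d → ℝ // euclNorm v ≤ 1}, euclNorm (A.mulVec v.1)

/-- Conditional covariance matrix of a random vector `Z` under the measure `P'`. -/
def condVarMat {Ω' : Type*} [MeasurableSpace Ω'] {d : ℕ} (P' : Measure Ω')
    (Z : Ω' → Fin d → ℝ) : Matrix (Fin d) (Fin d) ℝ :=
  Matrix.of fun j k =>
    ∫ ω', (Z ω' j - ∫ ω'', Z ω'' j ∂P') * (Z ω' k - ∫ ω'', Z ω'' k ∂P') ∂P'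

/-- The triangular-array data of a generalized linear model:  independent responses
`y n i` with nonrandom covariates `x n i ∈ ℝ^(d n)`, true parameter `β n`,
link components `b`, `h = (g ∘ b')⁻¹` and `ginv = g⁻¹`, such that
`E[y n i] = g⁻¹(xᵢᵀβ)`. -/
structure GLM (Ω : Type*) [MeasurableSpace Ω] where
  P : Measure Ω
  prob : IsProbabilityMeasure P
  d : ℕ → ℕ
  y : (n : ℕ) → Fin n → Ω → ℝ
  x : (n : ℕ) → Fin n → Fin (d n) → ℝ
  β : (n : ℕ) → Fin (d n) → ℝ
  b : ℝ → ℝ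
  h : ℝ → ℝ
  ginv : ℝ → ℝ
  meas_y : ∀ n i, Measurable (y n i)
  indep_y : ∀ n, iIndepFun (y n) P
  int_y : ∀ n i, Integrable (y n i) P
  mean_y : ∀ n i, ∫ ω, y n i ω ∂P = ginv (x n i ⬝ᵥ β n)

namespace GLM

variable {Ω : Type*} [MeasurableSpace Ω] (M : GLM Ω)

/-- The linear predictor `xᵢᵀβ`. -/
def lin (n : ℕ) (i : Fin n) : ℝ := M.x n i ⬝ᵥ M.β n

/-- `μᵢ = E[yᵢ] = g⁻¹(xᵢᵀβ)`. -/
def meanY (n : ℕ) (i : Fin n) : ℝ := M.ginv (M.lin n i)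

/-- `h₁ = b ∘ h`. -/
def h1 : ℝ → ℝ := fun u => M.b (M.h u)

/-- The negative log-likelihood `∑ᵢ (−yᵢ h(xᵢᵀv) + h₁(xᵢᵀv))`. -/
def nll (n : ℕ) (ω : Ω) (v : Fin (M.d n) → ℝ) : ℝ :=
  ∑ i : Fin n, (-(M.y n i ω) * M.h (M.x n i ⬝ᵥ v) + M.h1 (M.x n i ⬝ᵥ v))

/-- `W_n = n^{-1/2} ∑ᵢ (yᵢ − μᵢ) h'(xᵢᵀβ) xᵢ`. -/
def W (n : ℕ) (ω : Ω) : Fin (M.d n) → ℝ := fun j =>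
  (Real.sqrt n)⁻¹ * ∑ i : Fin n,
    (M.y n i ω - M.meanY n i) * deriv M.h (M.lin n i) * M.x n i j

/-- `S_n = Var(W_n)`. -/
def S (n : ℕ) : Matrix (Fin (M.d n)) (Fin (M.d n)) ℝ :=
  Matrix.of fun j k => (n : ℝ)⁻¹ * ∑ i : Fin n,
    M.x n i j * M.x n i k * (deriv M.h (M.lin n i)) ^ 2 *
      ∫ ω, (M.y n i ω - M.meanY n i) ^ 2 ∂M.P

/-- The random matrix `L_n`. -/
def L (n : ℕ) (ω : Ω) : Matrix (Fin (M.d n)) (Fin (M.d n)) ℝ :=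
  Matrix.of fun j k => (n : ℝ)⁻¹ * ∑ i : Fin n,
    M.x n i j * M.x n i k *
      (deriv M.ginv (M.lin n i) * deriv M.h (M.lin n i) -
        (M.y n i ω - M.meanY n i) * deriv (deriv M.h) (M.lin n i))

/-- `E L_n`. -/
def EL (n : ℕ) : Matrix (Fin (M.d n)) (Fin (M.d n)) ℝ :=
  Matrix.of fun j k => (n : ℝ)⁻¹ * ∑ i : Fin n,
    M.x n i j * M.x n i k * (deriv M.ginv (M.lin n i) * deriv M.h (M.lin n i))

/-- The leading (Bahadur) term `T_n = (E L_n)⁻¹ W_n`. -/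
def T (n : ℕ) (ω : Ω) : Fin (M.d n) → ℝ := (M.EL n)⁻¹.mulVec (M.W n ω)

/-- `S̃_n = (E L_n)⁻¹ S_n (E L_n)⁻¹`. -/
def Stilde (n : ℕ) : Matrix (Fin (M.d n)) (Fin (M.d n)) ℝ :=
  (M.EL n)⁻¹ * M.S n * (M.EL n)⁻¹

/-- Condition (C.1). -/
def C1 : Prop :=
  (M.h = id ∧ M.b = fun u => u ^ 2 / 2) ∨
    ((∀ n i ω, 0 ≤ M.y n i ω) ∧ StrictConvexOn ℝ Set.univ (fun u => -(M.h u)) ∧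
      StrictConvexOn ℝ Set.univ M.h1)

/-- Condition (C.2). -/
def C2 : Prop := ContDiff ℝ 3 M.h ∧ ContDiff ℝ 2 M.ginv

/-- Condition (C.3). -/
def C3 : Prop := ∀ n : ℕ, 0 < n → (M.S n).PosDef ∧ ∀ ω, (M.L n ω).PosDef

/-- Condition (C.4), expressed through the quadratic forms of `S_n` and `E L_n`. -/
def C4 (α1 α2 α3 c1 c2 c3 : ℝ) : Prop :=
  0 < α1 ∧ 0 < α2 ∧ 0 < α3 ∧ α1 + 2 * α2 + 2 * α3 < 1 / 2 ∧ α2 < 1 / 14 ∧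
    0 < c1 ∧ 0 < c2 ∧ c2 < c3 ∧
    ∀ n : ℕ, 0 < n →
      (∀ v : Fin (M.d n) → ℝ,
        c1 * (n : ℝ) ^ (-α1) * euclNorm v ^ 2 ≤ v ⬝ᵥ (M.S n).mulVec v) ∧
      (∀ v : Fin (M.d n) → ℝ,
        c2 * (n : ℝ) ^ (-α2) * euclNorm v ^ 2 ≤ v ⬝ᵥ (M.EL n).mulVec v ∧
          v ⬝ᵥ (M.EL n).mulVec v ≤ c3 * (n : ℝ) ^ α3 * euclNorm v ^ 2)

/-- Condition (C.5). -/
def C5 : Prop := ∃ K : ℝ, ∀ n (i : Fin n) j, |M.x n i j| ≤ K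

/-- Condition (C.6). -/
def C6 : Prop := ∃ K : ℝ, ∀ n j, |M.β n j| ≤ K

/-- Condition (C.7). -/
def C7 : Prop :=
  (∀ n i, Integrable (fun ω => |M.y n i ω| ^ 6) M.P) ∧
    ∃ K : ℝ, ∀ n : ℕ, 0 < n →
      (n : ℝ)⁻¹ * ∑ i : Fin n, ∫ ω, |M.y n i ω| ^ 6 ∂M.P ≤ K

/-- Condition (C.8). -/
def C8 : Prop :=
  ∃ K : ℝ, ∀ n : ℕ, 0 < n → ∀ a k : Fin (M.d n) → ℝ, euclNorm a = 1 → euclNorm k = 1 →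
    (n : ℝ)⁻¹ * ∑ i : Fin n, |a ⬝ᵥ M.x n i| ^ 8 * |k ⬝ᵥ M.x n i| ^ 8 ≤ K

/-- Condition (C.9.i). -/
def C9i : Prop := ∃ K : ℝ, ∀ n (i : Fin n), |deriv M.h (M.lin n i)| ≤ K

/-- Condition (C.9.ii). -/
def C9ii : Prop := ∃ K : ℝ, ∀ n (i : Fin n), |deriv (deriv M.h) (M.lin n i)| ≤ K

/-- Condition (C.9.iii). -/
def C9iii : Prop := ∃ K : ℝ, ∀ n (i : Fin n), |deriv M.ginv (M.lin n i)| ≤ K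

/-- Condition (C.9.iv). -/
def C9iv : Prop :=
  ∃ δ : ℝ, 0 < δ ∧ ∃ K : ℝ, ∀ n : ℕ, 0 < n → ∃ Bnd : Fin n → ℝ,
    (∀ i z, |z - M.lin n i| < δ → |deriv (deriv M.ginv) z| ^ 8 ≤ Bnd i) ∧
    (n : ℝ)⁻¹ * ∑ i, Bnd i ≤ K

/-- Condition (C.9.v). -/
def C9v : Prop :=
  ∃ δ : ℝ, 0 < δ ∧ ∃ K : ℝ, ∀ n : ℕ, 0 < n → ∃ Bnd : Fin n → ℝ,
    (∀ i z, |z - M.lin n i| < δ → |deriv (deriv (deriv M.h)) z| ^ 12 ≤ Bnd i) ∧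
    (n : ℝ)⁻¹ * ∑ i, Bnd i ≤ K

/-- Condition (C.9). -/
def C9 : Prop := M.C9i ∧ M.C9ii ∧ M.C9iii ∧ M.C9iv ∧ M.C9v

/-- The plug-in matrix `L̂_n`, computed at an estimator `βhat`. -/
def Lhat (βhat : (n : ℕ) → Ω → Fin (M.d n) → ℝ) (n : ℕ) (ω : Ω) :
    Matrix (Fin (M.d n)) (Fin (M.d n)) ℝ :=
  Matrix.of fun j k => (n : ℝ)⁻¹ * ∑ i : Fin n,
    M.x n i j * M.x n i k *
      (deriv M.ginv (M.x n i ⬝ᵥ βhat n ω) * deriv M.h (M.x n i ⬝ᵥ βhat n ω) -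
        (M.y n i ω - M.ginv (M.x n i ⬝ᵥ βhat n ω)) * deriv (deriv M.h) (M.x n i ⬝ᵥ βhat n ω))

/-- The perturbation-bootstrap objective function for the GLM estimator. -/
def bootObj {Ω' : Type*} (βhat : (n : ℕ) → Ω → Fin (M.d n) → ℝ) (Gs : ℕ → Ω' → ℝ)
    (μG : ℝ) (n : ℕ) (ω : Ω) (ω' : Ω') (v : Fin (M.d n) → ℝ) : ℝ :=
  M.nll n ω v + ∑ i : Fin n,
    (M.y n i ω - M.ginv (M.x n i ⬝ᵥ βhat n ω)) * deriv M.h (M.x n i ⬝ᵥ βhat n ω) *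
      (2 - Gs i.1 ω' / μG) * (M.x n i ⬝ᵥ v)

/-- The bootstrap score vector `Ŵ_n^*`. -/
def What {Ω' : Type*} (βhat : (n : ℕ) → Ω → Fin (M.d n) → ℝ) (Gs : ℕ → Ω' → ℝ)
    (μG : ℝ) (n : ℕ) (ω : Ω) (ω' : Ω') : Fin (M.d n) → ℝ := fun j =>
  (Real.sqrt n)⁻¹ * ∑ i : Fin n,
    (M.y n i ω - M.ginv (M.x n i ⬝ᵥ βhat n ω)) * deriv M.h (M.x n i ⬝ᵥ βhat n ω) *
      (Gs i.1 ω' / μG - 1) * M.x n i j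

/-- The bootstrap leading term `T̂_n^* = L̂_n⁻¹ Ŵ_n^*`. -/
def That {Ω' : Type*} (βhat : (n : ℕ) → Ω → Fin (M.d n) → ℝ) (Gs : ℕ → Ω' → ℝ)
    (μG : ℝ) (n : ℕ) (ω : Ω) (ω' : Ω') : Fin (M.d n) → ℝ :=
  (M.Lhat βhat n ω)⁻¹.mulVec (M.What βhat Gs μG n ω ω')

/-- The ℓ¹-penalized negative log-likelihood (Lasso objective). -/
def lassoObj (lam : ℕ → ℝ) (n : ℕ) (ω : Ω) (v : Fin (M.d n) → ℝ) : ℝ :=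
  M.nll n ω v + lam n * ∑ j, |v j|

/-- The perturbation-bootstrap Lasso objective function. -/
def bootLassoObj {Ω' : Type*} (βbar : (n : ℕ) → Ω → Fin (M.d n) → ℝ) (Gs : ℕ → Ω' → ℝ)
    (μG : ℝ) (lam : ℕ → ℝ) (n : ℕ) (ω : Ω) (ω' : Ω') (v : Fin (M.d n) → ℝ) : ℝ :=
  M.nll n ω v + ∑ i : Fin n,
    (M.y n i ω - M.ginv (M.x n i ⬝ᵥ βbar n ω)) * deriv M.h (M.x n i ⬝ᵥ βbar n ω) *
      (2 - Gs i.1 ω' / μG) * (M.x n i ⬝ᵥ v) + lam n * ∑ j, |v j|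

/-- The `(1,1)` block (active coordinates) of `E L_n`. -/
def EL11 (d0 : ℕ → ℕ) (hd0 : ∀ n, d0 n ≤ M.d n) (n : ℕ) :
    Matrix (Fin (d0 n)) (Fin (d0 n)) ℝ :=
  (M.EL n).submatrix (Fin.castLE (hd0 n)) (Fin.castLE (hd0 n))

/-- The `(1,1)` block of `S_n`. -/
def S11 (d0 : ℕ → ℕ) (hd0 : ∀ n, d0 n ≤ M.d n) (n : ℕ) :
    Matrix (Fin (d0 n)) (Fin (d0 n)) ℝ :=
  (M.S n).submatrix (Fin.castLE (hd0 n)) (Fin.castLE (hd0 n))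

/-- `S̃_{n,11} = (E L_{n,11})⁻¹ S_{n,11} (E L_{n,11})⁻¹`. -/
def Stilde11 (d0 : ℕ → ℕ) (hd0 : ∀ n, d0 n ≤ M.d n) (n : ℕ) :
    Matrix (Fin (d0 n)) (Fin (d0 n)) ℝ :=
  (M.EL11 d0 hd0 n)⁻¹ * M.S11 d0 hd0 n * (M.EL11 d0 hd0 n)⁻¹

/-- The sign vector of the active block `sgn(β^{(1)})`. -/
def sgn1 (d0 : ℕ → ℕ) (hd0 : ∀ n, d0 n ≤ M.d n) (n : ℕ) (k : Fin (d0 n)) : ℝ :=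
  Real.sign (M.β n (Fin.castLE (hd0 n) k))

/-- The `j`-th row of `E L_{n,21}` (columns restricted to the active block). -/
def row21 (d0 : ℕ → ℕ) (hd0 : ∀ n, d0 n ≤ M.d n) (n : ℕ) (j : Fin (M.d n)) :
    Fin (d0 n) → ℝ := fun k => M.EL n j (Fin.castLE (hd0 n) k)

/-- The active part `x_i^{(1)}` of the `i`-th covariate. -/
def x1 (d0 : ℕ → ℕ) (hd0 : ∀ n, d0 n ≤ M.d n) (n : ℕ) (i : Fin n) :
    Fin (d0 n) → ℝ := fun k => M.x n i (Fin.castLE (hd0 n) k)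

/-- The active set is `{1, …, d₀}`:  `β_j ≠ 0` exactly for the first `d₀` coordinates. -/
def ActiveFirst (d0 : ℕ → ℕ) : Prop :=
  ∀ n (j : Fin (M.d n)), M.β n j ≠ 0 ↔ (j : ℕ) < d0 n

/-- Condition (D.1). -/
def D1 (d0 : ℕ → ℕ) (hd0 : ∀ n, d0 n ≤ M.d n) (γ1 γ2 γ3 k1 k2 k3 : ℝ) : Prop :=
  0 < γ1 ∧ 0 < γ2 ∧ 0 < γ3 ∧ γ1 + 2 * γ2 + 2 * γ3 < 1 / 2 ∧ γ2 < 1 / 24 ∧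
    0 < k1 ∧ 0 < k2 ∧ k2 < k3 ∧
    ∀ n : ℕ, 0 < n →
      (∀ v : Fin (d0 n) → ℝ,
        k1 * (n : ℝ) ^ (-γ1) * euclNorm v ^ 2 ≤ v ⬝ᵥ (M.S11 d0 hd0 n).mulVec v) ∧
      (∀ v : Fin (d0 n) → ℝ,
        k2 * (n : ℝ) ^ (-γ2) * euclNorm v ^ 2 ≤ v ⬝ᵥ (M.EL11 d0 hd0 n).mulVec v ∧
          v ⬝ᵥ (M.EL11 d0 hd0 n).mulVec v ≤ k3 * (n : ℝ) ^ γ3 * euclNorm v ^ 2)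

/-- Condition (D.2). -/
def D2 (d0 : ℕ → ℕ) (hd0 : ∀ n, d0 n ≤ M.d n) : Prop :=
  ∃ K : ℝ, ∀ n : ℕ, 0 < n → ∀ j : Fin (M.d n), d0 n ≤ (j : ℕ) → ∀ i : Fin n,
    |M.row21 d0 hd0 n j ⬝ᵥ (M.EL11 d0 hd0 n)⁻¹.mulVec (M.x1 d0 hd0 n i)| ≤ K

/-- Condition (D.3.i). -/
def D3i (d0 : ℕ → ℕ) (γ2 τ : ℝ) : Prop :=
  (fun n => (d0 n : ℝ)) =o[atTop] fun n => (n : ℝ) ^ (1 / 3 - 2 * γ2 - 8 * τ / 9)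

/-- Condition (D.3.ii). -/
def D3ii (lam : ℕ → ℝ) (τ B1 : ℝ) : Prop :=
  ∀ n : ℕ, 0 < n → B1 * (n : ℝ) ^ τ ≤ lam n / Real.sqrt n

/-- Condition (D.3.iii). -/
def D3iii (d0 : ℕ → ℕ) (lam : ℕ → ℝ) (γ2 τ : ℝ) : Prop :=
  ∃ K : ℝ, ∀ n : ℕ, 0 < n →
    lam n / Real.sqrt n ≤ K * (n : ℝ) ^ (1 / 4 - 3 * γ2 / 2 - τ / 3) / (d0 n : ℝ) ^ ((3 : ℝ) / 4)

/-- Condition (D.3.iv), the "beta-min" condition. -/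
def D3iv (d0 : ℕ → ℕ) (lam : ℕ → ℝ) (γ2 B2 : ℝ) : Prop :=
  ∀ n : ℕ, 0 < n → ∀ j : Fin (M.d n), (j : ℕ) < d0 n →
    B2 * (n : ℝ) ^ (-(1 - γ2)) * lam n * Real.sqrt (d0 n) ≤ |M.β n j|

/-- Condition (D.4), the weak irrepresentable condition. -/
def D4 (d0 : ℕ → ℕ) (hd0 : ∀ n, d0 n ≤ M.d n) : Prop :=
  ∃ η : ℝ, 0 < η ∧ ∀ n : ℕ, 0 < n → ∀ j : Fin (M.d n), d0 n ≤ (j : ℕ) →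
    |M.row21 d0 hd0 n j ⬝ᵥ (M.EL11 d0 hd0 n)⁻¹.mulVec (M.sgn1 d0 hd0 n)| < 1 - η

end GLM

/-- The perturbation-bootstrap weights `G_1^*, G_2^*, …` : i.i.d. copies of a nonnegative,
non-degenerate random variable `G^*`, independent of the data, with mean `μG`,
variance `μG ^ 2` and a finite fourth moment. -/
def BootWeights {Ω' : Type*} [MeasurableSpace Ω'] (P' : Measure Ω') (Gs : ℕ → Ω' → ℝ)
    (μG : ℝ) : Prop :=
  (∀ i, Measurable (Gs i)) ∧ (∀ i ω', 0 ≤ Gs i ω') ∧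
    iIndepFun Gs P' ∧
    (∀ i, P'.map (Gs i) = P'.map (Gs 0)) ∧
    Integrable (Gs 0) P' ∧ μG = (∫ ω', Gs 0 ω' ∂P') ∧ 0 < μG ∧
    Integrable (fun ω' => (Gs 0 ω') ^ 2) P' ∧
    (∫ ω', (Gs 0 ω' - μG) ^ 2 ∂P') = μG ^ 2 ∧
    Integrable (fun ω' => (Gs 0 ω') ^ 4) P'


lemma sq_le_one_add_abs_pow_six (t : ℝ) : t ^ 2 ≤ 1 + |t| ^ 6 := by
  rcases le_or_gt (|t|) 1 with h | h
  · have h2 : t ^ 2 = |t| ^ 2 := (sq_abs t).symm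
    nlinarith [abs_nonneg t, pow_nonneg (abs_nonneg t) 6]
  · have h1 : (1:ℝ) ≤ |t| := h.le
    have h2 : |t| ^ 2 ≤ |t| ^ 6 := pow_le_pow_right₀ h1 (by norm_num)
    nlinarith [sq_abs t]

lemma matOpNorm_le_hsNorm {d : ℕ} (A : Matrix (Fin d) (Fin d) ℝ) :
    matOpNorm A ≤ hsNorm A := by
  haveI : Nonempty {v : Fin d → ℝ // euclNorm v ≤ 1} :=
    ⟨⟨0, by simp [euclNorm]⟩⟩
  refine ciSup_le fun v => ?_
  obtain ⟨v, hv⟩ := v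
  have h0 : (0:ℝ) ≤ ∑ k, v k ^ 2 := Finset.sum_nonneg fun _ _ => sq_nonneg _
  have hv2 : ∑ k, v k ^ 2 ≤ 1 := by
    have h1 := Real.sq_sqrt h0
    have h2 : Real.sqrt (∑ k, v k ^ 2) ≤ 1 := hv
    nlinarith [Real.sqrt_nonneg (∑ k, v k ^ 2)]
  unfold euclNorm hsNorm
  apply Real.sqrt_le_sqrt
  calc ∑ j, (A.mulVec v j) ^ 2
      ≤ ∑ j, (∑ k, A j k ^ 2) * (∑ k, v k ^ 2) := by
        refine Finset.sum_le_sum fun j _ => ?_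
        simpa [Matrix.mulVec, dotProduct] using
          Finset.sum_mul_sq_le_sq_mul_sq Finset.univ (A j) v
    _ ≤ ∑ j, ∑ k, A j k ^ 2 := by
        refine Finset.sum_le_sum fun j _ => ?_
        exact mul_le_of_le_one_right (Finset.sum_nonneg fun _ _ => sq_nonneg _) hv2

lemma variance_sub_const' {Ω : Type*} [MeasurableSpace Ω] {P : Measure Ω}
    [IsProbabilityMeasure P] {X : Ω → ℝ} (hX : Integrable X P) (a : ℝ) :
    variance (fun ω => X ω - a) P = variance X P := by
  have hm : ∫ ω, (X ω - a) ∂P = (∫ ω, X ω ∂P) - a := by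
    rw [integral_sub hX (integrable_const a), integral_const]; simp
  simp only [variance, evariance, hm, sub_sub_sub_cancel_right]

lemma GLM.entry_sq_bound {Ω : Type*} [MeasurableSpace Ω] (M : GLM Ω)
    {Kx Kh : ℝ}
    (hKx : ∀ n (i : Fin n) j, |M.x n i j| ≤ Kx)
    (hy6 : ∀ n (i : Fin n), Integrable (fun ω => |M.y n i ω| ^ 6) M.P)
    (hKh : ∀ n (i : Fin n), |deriv (deriv M.h) (M.lin n i)| ≤ Kh)
    (n : ℕ) (j k : Fin (M.d n)) :
    Integrable (fun ω => ((M.L n ω - M.EL n) j k) ^ 2) M.P ∧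
    ∫ ω, ((M.L n ω - M.EL n) j k) ^ 2 ∂M.P ≤
      (n : ℝ)⁻¹ ^ 2 * ∑ i : Fin n,
        (Kx ^ 2 * Kx ^ 2 * Kh ^ 2) * (1 + ∫ ω, |M.y n i ω| ^ 6 ∂M.P) := by
  haveI := M.prob
  set c : Fin n → ℝ := fun i => M.x n i j * M.x n i k * deriv (deriv M.h) (M.lin n i)
    with hc
  set Z : Fin n → Ω → ℝ := fun i ω => c i * (M.y n i ω - M.meanY n i) with hZ
  have hyint : ∀ i, Integrable (M.y n i) M.P := M.int_y n
  have hysq : ∀ i : Fin n, Integrable (fun ω => (M.y n i ω) ^ 2) M.P := by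
    intro i
    refine ((integrable_const (1:ℝ)).add (hy6 n i)).mono
      ((M.meas_y n i).pow_const 2).aestronglyMeasurable (ae_of_all _ fun ω => ?_)
    have h1 := sq_le_one_add_abs_pow_six (M.y n i ω)
    have h0 : (0:ℝ) ≤ 1 + |M.y n i ω| ^ 6 := by positivity
    simpa [Real.norm_eq_abs, abs_of_nonneg (sq_nonneg (M.y n i ω)), abs_of_nonneg h0]
      using h1
  have hy2 : ∀ i : Fin n, MemLp (M.y n i) 2 M.P := fun i =>
    (memLp_two_iff_integrable_sq (M.meas_y n i).aestronglyMeasurable).2 (hysq i)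
  have hZmem : ∀ i, MemLp (Z i) 2 M.P := fun i =>
    (((hy2 i).sub (memLp_const (M.meanY n i))).const_mul (c i))
  have hZint : ∀ i, Integrable (Z i) M.P := fun i => (hZmem i).integrable one_le_two
  have hZmean : ∀ i, ∫ ω, Z i ω ∂M.P = 0 := by
    intro i
    have h1 : ∫ ω, (M.y n i ω - M.meanY n i) ∂M.P = 0 := by
      rw [integral_sub (hyint i) (integrable_const _), integral_const]
      simp [M.mean_y n i, GLM.meanY, GLM.lin]
    simp only [hZ]
    rw [integral_const_mul, h1, mul_zero]
  have hentry : ∀ ω, (M.L n ω - M.EL n) j k = -((n:ℝ)⁻¹ * ∑ i, Z i ω) := by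
    intro ω
    simp only [Matrix.sub_apply, GLM.L, GLM.EL, Matrix.of_apply]
    rw [← mul_sub, ← Finset.sum_sub_distrib, neg_mul_eq_mul_neg, ← Finset.sum_neg_distrib]
    refine congrArg _ (Finset.sum_congr rfl fun i _ => ?_)
    simp only [hZ, hc]
    ring
  have hfun : (fun ω => ((M.L n ω - M.EL n) j k) ^ 2)
      = fun ω => (n:ℝ)⁻¹ ^ 2 * (∑ i, Z i ω) ^ 2 := by
    funext ω; rw [hentry ω]; ring
  have hS2 : Integrable (fun ω => (∑ i, Z i ω) ^ 2) M.P := by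
    have h1 := (memLp_finsetSum' Finset.univ (fun i (_ : i ∈ Finset.univ) => hZmem i)).integrable_sq
    simpa [Finset.sum_apply] using h1
  have hint : Integrable (fun ω => ((M.L n ω - M.EL n) j k) ^ 2) M.P := by
    rw [hfun]; exact hS2.const_mul _
  refine ⟨hint, ?_⟩
  have h0 : ∫ ω, (∑ i : Fin n, Z i) ω ∂M.P = 0 := by
    simp only [Finset.sum_apply]
    rw [integral_finset_sum _ (fun i _ => hZint i)]
    simp [hZmean]
  have hvar : ∫ ω, (∑ i, Z i ω) ^ 2 ∂M.P = variance (∑ i : Fin n, Z i) M.P := by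
    rw [variance_of_integral_eq_zero
      (memLp_finsetSum' Finset.univ (fun i (_ : i ∈ Finset.univ) => hZmem i)).aestronglyMeasurable.aemeasurable h0]
    simp [Finset.sum_apply]
  have hvs : variance (∑ i : Fin n, Z i) M.P = ∑ i, variance (Z i) M.P := by
    refine IndepFun.variance_sum (fun i _ => hZmem i) ?_
    intro i hi i' hi' hne
    have h1 : IndepFun (M.y n i) (M.y n i') M.P := (M.indep_y n).indepFun hne
    exact h1.comp (φ := fun t => c i * (t - M.meanY n i))
      (ψ := fun t => c i' * (t - M.meanY n i')) (by fun_prop) (by fun_prop)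
  have hvbound : ∀ i : Fin n, variance (Z i) M.P ≤
      (Kx ^ 2 * Kx ^ 2 * Kh ^ 2) * (1 + ∫ ω, |M.y n i ω| ^ 6 ∂M.P) := by
    intro i
    have hzi : variance (Z i) M.P = c i ^ 2 * variance (M.y n i) M.P := by
      have h1 : variance (Z i) M.P
          = variance (fun ω => c i * (M.y n i ω - M.meanY n i)) M.P := rfl
      rw [h1, variance_const_mul, variance_sub_const' (hyint i)]
    have hvy : variance (M.y n i) M.P ≤ 1 + ∫ ω, |M.y n i ω| ^ 6 ∂M.P := by
      have h1 := variance_le_expectation_sq (μ := M.P) (X := M.y n i)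
        (M.meas_y n i).aestronglyMeasurable
      have h2 : (∫ ω, (M.y n i ω) ^ 2 ∂M.P) ≤ ∫ ω, (1 + |M.y n i ω| ^ 6) ∂M.P := by
        refine integral_mono (hysq i) ((integrable_const (1:ℝ)).add (hy6 n i)) ?_
        intro ω; exact sq_le_one_add_abs_pow_six (M.y n i ω)
      have h3 : ∫ ω, (1 + |M.y n i ω| ^ 6) ∂M.P = 1 + ∫ ω, |M.y n i ω| ^ 6 ∂M.P := by
        rw [integral_add (integrable_const _) (hy6 n i)]
        simp
      calc variance (M.y n i) M.P ≤ ∫ ω, ((M.y n i) ^ 2) ω ∂M.P := h1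
        _ = ∫ ω, (M.y n i ω) ^ 2 ∂M.P := by simp
        _ ≤ 1 + ∫ ω, |M.y n i ω| ^ 6 ∂M.P := h3 ▸ h2
    have hci : c i ^ 2 ≤ Kx ^ 2 * Kx ^ 2 * Kh ^ 2 := by
      have haj := abs_le.1 (hKx n i j)
      have hak := abs_le.1 (hKx n i k)
      have hah := abs_le.1 (hKh n i)
      have h1 : M.x n i j ^ 2 ≤ Kx ^ 2 := sq_le_sq' haj.1 haj.2
      have h2 : M.x n i k ^ 2 ≤ Kx ^ 2 := sq_le_sq' hak.1 hak.2
      have h3 : deriv (deriv M.h) (M.lin n i) ^ 2 ≤ Kh ^ 2 := sq_le_sq' hah.1 hah.2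
      have hK2 : (0:ℝ) ≤ Kx ^ 2 := le_trans (sq_nonneg _) h1
      have he : c i ^ 2 = M.x n i j ^ 2 * M.x n i k ^ 2
          * deriv (deriv M.h) (M.lin n i) ^ 2 := by simp only [hc]; ring
      rw [he]
      exact mul_le_mul (mul_le_mul h1 h2 (sq_nonneg _) hK2) h3 (sq_nonneg _)
        (mul_nonneg hK2 hK2)
    have hvy0 : 0 ≤ variance (M.y n i) M.P := variance_nonneg _ _
    have hb0 : (0:ℝ) ≤ 1 + ∫ ω, |M.y n i ω| ^ 6 ∂M.P := by
      have : (0:ℝ) ≤ ∫ ω, |M.y n i ω| ^ 6 ∂M.P :=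
        integral_nonneg fun ω => by positivity
      linarith
    rw [hzi]
    exact mul_le_mul hci hvy hvy0 (by positivity)
  calc ∫ ω, ((M.L n ω - M.EL n) j k) ^ 2 ∂M.P
      = (n:ℝ)⁻¹ ^ 2 * ∫ ω, (∑ i, Z i ω) ^ 2 ∂M.P := by rw [hfun, integral_const_mul]
    _ = (n:ℝ)⁻¹ ^ 2 * ∑ i, variance (Z i) M.P := by rw [hvar, hvs]
    _ ≤ (n:ℝ)⁻¹ ^ 2 * ∑ i : Fin n,
        (Kx ^ 2 * Kx ^ 2 * Kh ^ 2) * (1 + ∫ ω, |M.y n i ω| ^ 6 ∂M.P) := by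
        refine mul_le_mul_of_nonneg_left (Finset.sum_le_sum fun i _ => hvbound i)
          (by positivity)

/-- Lemma on the closeness of `L_n` and `E L_n`.  Under conditions
(C.5), (C.7) and (C.9.ii), `‖L_n − E L_n‖_op = O_p(d/n^{1/2})`; in particular, if
`d = o(n^{1/2})` then `‖L_n − E L_n‖_op → 0` in probability. -/
theorem statement14 {Ω : Type*} [MeasurableSpace Ω] (M : GLM Ω)
    (hC5 : M.C5) (hC7 : M.C7) (hC9ii : M.C9ii) :
    (∀ ε : ℝ, 0 < ε → ∃ C : ℝ, 0 < C ∧ ∃ N : ℕ, ∀ n ≥ N,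
      (M.P {ω | C * ((M.d n : ℝ) / Real.sqrt (n : ℝ)) <
        matOpNorm (M.L n ω - M.EL n)}).toReal < ε) ∧
    (((fun n => (M.d n : ℝ)) =o[atTop] fun n => Real.sqrt (n : ℝ)) →
      ∀ ε : ℝ, 0 < ε → Tendsto (fun n : ℕ =>
        (M.P {ω | ε < matOpNorm (M.L n ω - M.EL n)}).toReal) atTop (𝓝 0)) := by
  haveI := M.prob
  obtain ⟨Kx, hKx⟩ := hC5
  obtain ⟨hy6, Ky, hKy⟩ := hC7
  obtain ⟨Kh, hKh⟩ := hC9ii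
  set A := Kx ^ 2 * Kx ^ 2 * Kh ^ 2 with hA
  have hA0 : 0 ≤ A := by positivity
  have hKy0 : 0 ≤ Ky := by
    refine le_trans ?_ (hKy 1 one_pos)
    have : (0:ℝ) ≤ ∑ i : Fin 1, ∫ ω, |M.y 1 i ω| ^ 6 ∂M.P :=
      Finset.sum_nonneg fun i _ => integral_nonneg fun ω => by positivity
    positivity
  set B := A * (1 + Ky) with hB
  have hB0 : 0 ≤ B := mul_nonneg hA0 (by linarith)
  have part1 : ∀ ε : ℝ, 0 < ε → ∃ C : ℝ, 0 < C ∧ ∃ N : ℕ, ∀ n ≥ N,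
      (M.P {ω | C * ((M.d n : ℝ) / Real.sqrt (n : ℝ)) <
        matOpNorm (M.L n ω - M.EL n)}).toReal < ε := by
    intro ε hε
    set C := Real.sqrt (B / ε) + 1 with hCdef
    have hC : 0 < C := by positivity
    have hCB : B / C ^ 2 < ε := by
      have h1 : Real.sqrt (B / ε) ^ 2 = B / ε := Real.sq_sqrt (by positivity)
      have h2 : B / ε < C ^ 2 := by nlinarith [Real.sqrt_nonneg (B / ε)]
      have h3 := mul_lt_mul_of_pos_right h2 hε
      rw [div_mul_cancel₀ _ (ne_of_gt hε)] at h3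
      rw [div_lt_iff₀ (by positivity : (0:ℝ) < C ^ 2)]
      linarith
    refine ⟨C, hC, 1, fun n hn => ?_⟩
    rcases Nat.eq_zero_or_pos (M.d n) with hd | hd
    · have hcast : ((M.d n : ℝ)) = 0 := by exact_mod_cast hd
      have hempty : {ω | C * ((M.d n : ℝ) / Real.sqrt (n : ℝ)) <
          matOpNorm (M.L n ω - M.EL n)} = ∅ := by
        ext ω
        simp only [Set.mem_setOf_eq, Set.mem_empty_iff_false, iff_false, not_lt]
        haveI : IsEmpty (Fin (M.d n)) := by rw [hd]; infer_instance
        have h1 : matOpNorm (M.L n ω - M.EL n) ≤ hsNorm (M.L n ω - M.EL n) :=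
          matOpNorm_le_hsNorm _
        have h2 : hsNorm (M.L n ω - M.EL n) = 0 := by simp [hsNorm]
        rw [hcast]
        simp only [zero_div, mul_zero]
        linarith
      rw [hempty]
      simpa using hε
    · have hn1 : (1:ℝ) ≤ (n:ℝ) := by exact_mod_cast hn
      have hnpos : (0:ℝ) < (n:ℝ) := by linarith
      have hsqn : (0:ℝ) < Real.sqrt (n:ℝ) := Real.sqrt_pos.2 hnpos
      have hdpos : (0:ℝ) < (M.d n : ℝ) := by exact_mod_cast hd
      set t := C * ((M.d n : ℝ) / Real.sqrt (n:ℝ)) with ht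
      have ht0 : 0 < t := by positivity
      set f : Ω → ℝ := fun ω =>
        ∑ j : Fin (M.d n), ∑ k : Fin (M.d n), ((M.L n ω - M.EL n) j k) ^ 2 with hf
      have hint : Integrable f M.P :=
        integrable_finset_sum _ fun j _ => integrable_finset_sum _ fun k _ =>
          (M.entry_sq_bound hKx hy6 hKh n j k).1
      have hf0 : ∀ ω, 0 ≤ f ω := fun ω =>
        Finset.sum_nonneg fun _ _ => Finset.sum_nonneg fun _ _ => sq_nonneg _
      have hsum : ∑ i : Fin n, A * (1 + ∫ ω, |M.y n i ω| ^ 6 ∂M.P) ≤ (n:ℝ) * B := by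
        have h1 : ∑ i : Fin n, ∫ ω, |M.y n i ω| ^ 6 ∂M.P ≤ (n:ℝ) * Ky := by
          have h2 := hKy n hn
          rw [inv_mul_le_iff₀ hnpos] at h2
          linarith
        calc ∑ i : Fin n, A * (1 + ∫ ω, |M.y n i ω| ^ 6 ∂M.P)
            = A * ((n:ℝ) + ∑ i : Fin n, ∫ ω, |M.y n i ω| ^ 6 ∂M.P) := by
              rw [← Finset.mul_sum, Finset.sum_add_distrib]
              simp [Finset.card_univ, mul_add]
          _ ≤ A * ((n:ℝ) + (n:ℝ) * Ky) := by
              refine mul_le_mul_of_nonneg_left ?_ hA0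
              linarith
          _ = (n:ℝ) * B := by rw [hB]; ring
      have hIf : ∫ ω, f ω ∂M.P ≤ (M.d n : ℝ) ^ 2 * B / (n:ℝ) := by
        have h1 : ∫ ω, f ω ∂M.P = ∑ j : Fin (M.d n), ∑ k : Fin (M.d n),
            ∫ ω, ((M.L n ω - M.EL n) j k) ^ 2 ∂M.P := by
          rw [integral_finset_sum _ (fun j _ => integrable_finset_sum _ fun k _ =>
            (M.entry_sq_bound hKx hy6 hKh n j k).1)]
          exact Finset.sum_congr rfl fun j _ =>
            integral_finset_sum _ fun k _ => (M.entry_sq_bound hKx hy6 hKh n j k).1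
        rw [h1]
        have h2 : ∀ (j k : Fin (M.d n)),
            ∫ ω, ((M.L n ω - M.EL n) j k) ^ 2 ∂M.P ≤ (n:ℝ)⁻¹ ^ 2 * ((n:ℝ) * B) := by
          intro j k
          refine le_trans (M.entry_sq_bound hKx hy6 hKh n j k).2 ?_
          exact mul_le_mul_of_nonneg_left hsum (by positivity)
        calc ∑ j : Fin (M.d n), ∑ k : Fin (M.d n),
              ∫ ω, ((M.L n ω - M.EL n) j k) ^ 2 ∂M.P
            ≤ ∑ _j : Fin (M.d n), ∑ _k : Fin (M.d n), (n:ℝ)⁻¹ ^ 2 * ((n:ℝ) * B) :=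
              Finset.sum_le_sum fun j _ => Finset.sum_le_sum fun k _ => h2 j k
          _ = (M.d n : ℝ) ^ 2 * B / (n:ℝ) := by
              simp [Finset.sum_const, Finset.card_univ]
              field_simp
      have hincl : {ω | t < matOpNorm (M.L n ω - M.EL n)} ⊆ {ω | t ^ 2 ≤ f ω} := by
        intro ω hω
        have h1 : t < hsNorm (M.L n ω - M.EL n) :=
          lt_of_lt_of_le hω (matOpNorm_le_hsNorm _)
        have h2 : hsNorm (M.L n ω - M.EL n) = Real.sqrt (f ω) := rfl
        rw [h2, Real.lt_sqrt ht0.le] at h1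
        exact h1.le
      have hmarkov := mul_meas_ge_le_integral_of_nonneg (ae_of_all _ hf0) hint (t ^ 2)
      have hmono : (M.P {ω | t < matOpNorm (M.L n ω - M.EL n)}).toReal
          ≤ (M.P {ω | t ^ 2 ≤ f ω}).toReal :=
        ENNReal.toReal_mono (measure_ne_top _ _) (measure_mono hincl)
      have ht2 : t ^ 2 = C ^ 2 * (M.d n : ℝ) ^ 2 / (n:ℝ) := by
        rw [ht, mul_pow, div_pow, Real.sq_sqrt hnpos.le]
        ring
      calc (M.P {ω | t < matOpNorm (M.L n ω - M.EL n)}).toReal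
          ≤ (M.P {ω | t ^ 2 ≤ f ω}).toReal := hmono
        _ ≤ (∫ ω, f ω ∂M.P) / t ^ 2 := by
            rw [le_div_iff₀ (by positivity : (0:ℝ) < t ^ 2)]
            rw [show M.P.real {x | t ^ 2 ≤ f x} = (M.P {ω | t ^ 2 ≤ f ω}).toReal from rfl] at hmarkov
            linarith [hmarkov]
        _ ≤ ((M.d n : ℝ) ^ 2 * B / (n:ℝ)) / t ^ 2 :=
            (div_le_div_iff_of_pos_right (by positivity)).2 hIf
        _ = B / C ^ 2 := by
            rw [ht2]
            field_simp
        _ < ε := hCB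
  refine ⟨part1, ?_⟩
  intro hlo ε hε
  rw [Metric.tendsto_atTop]
  intro η hη
  obtain ⟨C, hC, N₀, hN₀⟩ := part1 η hη
  have hev := hlo.def (show (0:ℝ) < ε / C by positivity)
  rw [eventually_atTop] at hev
  obtain ⟨N₁, hN₁⟩ := hev
  refine ⟨max (max N₀ N₁) 1, fun n hn => ?_⟩
  have hn0 : N₀ ≤ n := le_trans (le_trans (le_max_left _ _) (le_max_left _ _)) hn
  have hn1 : N₁ ≤ n := le_trans (le_trans (le_max_right _ _) (le_max_left _ _)) hn
  have hnn : 1 ≤ n := le_trans (le_max_right _ _) hn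
  have hb := hN₁ n hn1
  rw [Real.norm_eq_abs, Real.norm_eq_abs,
    abs_of_nonneg (Nat.cast_nonneg (M.d n) : (0:ℝ) ≤ (M.d n : ℝ)),
    abs_of_nonneg (Real.sqrt_nonneg ((n:ℝ)))] at hb
  have hnpos : (0:ℝ) < (n:ℝ) := by exact_mod_cast hnn
  have hsqn : (0:ℝ) < Real.sqrt (n:ℝ) := Real.sqrt_pos.2 hnpos
  have hle : C * ((M.d n : ℝ) / Real.sqrt (n:ℝ)) ≤ ε := by
    have h1 : (M.d n : ℝ) / Real.sqrt (n:ℝ) ≤ ε / C := (div_le_div_iff₀ hsqn hC).2 (by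
      calc (M.d n : ℝ) * C ≤ (ε / C * Real.sqrt (n:ℝ)) * C :=
            mul_le_mul_of_nonneg_right hb hC.le
        _ = ε * Real.sqrt (n:ℝ) := by field_simp)
    calc C * ((M.d n : ℝ) / Real.sqrt (n:ℝ)) ≤ C * (ε / C) :=
          mul_le_mul_of_nonneg_left h1 hC.le
      _ = ε := by field_simp
  have hsub : {ω | ε < matOpNorm (M.L n ω - M.EL n)} ⊆
      {ω | C * ((M.d n : ℝ) / Real.sqrt (n:ℝ)) < matOpNorm (M.L n ω - M.EL n)} :=
    fun ω hω => lt_of_le_of_lt hle hω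
  have hmono : (M.P {ω | ε < matOpNorm (M.L n ω - M.EL n)}).toReal
      ≤ (M.P {ω | C * ((M.d n : ℝ) / Real.sqrt (n:ℝ)) <
          matOpNorm (M.L n ω - M.EL n)}).toReal :=
    ENNReal.toReal_mono (measure_ne_top _ _) (measure_mono hsub)
  rw [dist_zero_right, Real.norm_eq_abs, abs_of_nonneg ENNReal.toReal_nonneg]
  exact lt_of_le_of_lt hmono (hN₀ n hn0)
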